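/- Let F be a voting method whose domain is the set of all profiles with two or three alternatives. If F satisfies anonymity, neutrality, weak positive responsiveness, positive involvement, Condorcet consistency, homogeneity, and block preservation, then F refines Minimax: F(P) ⊆ Minimax(P) for every profile P in the domain of F. -/

import Mathlib

/-!
Formalization of notions from "An extension of May's Theorem to three
alternatives: axiomatizing Minimax voting" by Holliday and Pacuit.

The set of voters is the countably infinite set `ℕ`; the set `α` of
alternatives is a type (assumed to have at least three elements where the
paper assumes `|𝒳| ≥ 3`).
-/

namespace MayMinimax

/-- A profile: a finite set of voters drawn from the countably infinite set `ℕ`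
of all voters, a finite set of alternatives, and, for each voter, a binary
relation on alternatives given as a Boolean-valued function:
`P.rel i a b = true` means that voter `i` ranks `a` above `b`. -/
structure Profile (α : Type*) where
  voters : Finset ℕ
  alts : Finset α
  rel : ℕ → α → α → Bool

variable {α : Type*} [DecidableEq α]

/-- Each voter's ballot is a strict weak order (asymmetric and negatively
transitive) on the alternatives. -/
def IsSWO (P : Profile α) : Prop :=
  ∀ i ∈ P.voters,
    (∀ a ∈ P.alts, ∀ b ∈ P.alts, P.rel i a b = true → P.rel i b a = false) ∧
    (∀ a ∈ P.alts, ∀ b ∈ P.alts, ∀ c ∈ P.alts,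
      P.rel i a b = false → P.rel i b c = false → P.rel i a c = false)

/-- The margin of `a` over `b` in `P`: the number of voters ranking `a` above
`b` minus the number of voters ranking `b` above `a`. -/
def Margin (P : Profile α) (a b : α) : ℤ :=
  ((P.voters.filter fun i => P.rel i a b = true).card : ℤ) -
    ((P.voters.filter fun i => P.rel i b a = true).card : ℤ)

/-- The number of voters ranking `a` above `b` in `P`. -/
def Support (P : Profile α) (a b : α) : ℕ :=
  (P.voters.filter fun i => P.rel i a b = true).card

/-- The Minimax score of `a`: the maximum margin of any other alternative over `a`. -/
def MMScore (P : Profile α) (a : α) : ℤ :=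
  WithBot.unbotD 0 (((P.alts.erase a).image fun b => Margin P b a).max)

/-- The set of Minimax winners: alternatives with minimal Minimax score. -/
def Minimax (P : Profile α) : Finset α :=
  P.alts.filter fun a => ∀ b ∈ P.alts, MMScore P a ≤ MMScore P b

/-- Restriction of a profile to a subset `Y` of the alternatives. -/
def Profile.restrict (P : Profile α) (Y : Finset α) : Profile α where
  voters := P.voters
  alts := Y
  rel := fun i a b => P.rel i a b && decide (a ∈ Y) && decide (b ∈ Y)

/-- `P.minus b` is `P` restricted to `X(P) \ {b}`. -/
def Profile.minus (P : Profile α) (b : α) : Profile α :=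
  P.restrict (P.alts.erase b)

/-- The combination `P + Q` of two profiles (used with disjoint voter sets and
the same set of alternatives). -/
def Profile.combine (P Q : Profile α) : Profile α where
  voters := P.voters ∪ Q.voters
  alts := P.alts
  rel := fun i a b => if i ∈ P.voters then P.rel i a b else Q.rel i a b

/-- `2P`: the profile `P` together with a copy of `P` on a disjoint set of voters. -/
def Profile.double (P : Profile α) : Profile α where
  voters := P.voters ∪ P.voters.image fun i => i + (P.voters.sup id + 1)
  alts := P.alts
  rel := fun i a b =>
    if i ∈ P.voters then P.rel i a b else P.rel (i - (P.voters.sup id + 1)) a b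

/-- `r` is (the strict part of) a linear order on the finite set `X`. -/
def IsLinearOn (r : α → α → Bool) (X : Finset α) : Prop :=
  (∀ a ∈ X, r a a = false) ∧
  (∀ a ∈ X, ∀ b ∈ X, ∀ c ∈ X, r a b = true → r b c = true → r a c = true) ∧
  (∀ a ∈ X, ∀ b ∈ X, a ≠ b → (r a b = true ∨ r b a = true)) ∧
  (∀ a ∈ X, ∀ b ∈ X, r a b = true → r b a = false)

/-- `Q` is a block profile for the set `X` of alternatives: it contains, for
each linear order of `X`, exactly one voter submitting that linear order, and
no other voters. -/
def IsBlock (X : Finset α) (Q : Profile α) : Prop :=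
  Q.alts = X ∧
  (∀ i ∈ Q.voters, IsLinearOn (Q.rel i) X) ∧
  (∀ r : α → α → Bool, IsLinearOn r X →
    ∃! i, i ∈ Q.voters ∧ ∀ a ∈ X, ∀ b ∈ X, Q.rel i a b = r a b)

/-- `P'` is obtained from `P` by one voter who ranked `a` uniquely last in `P`
switching to ranking `a` uniquely first in `P'`, with the restriction of that
voter's relation to `X(P) \ {a}` unchanged and all other voters' relations
unchanged. -/
def MoveLastToFirst (P P' : Profile α) (a : α) : Prop :=
  P'.voters = P.voters ∧ P'.alts = P.alts ∧ a ∈ P.alts ∧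
  ∃ i ∈ P.voters,
    (∀ b ∈ P.alts, b ≠ a → P.rel i b a = true) ∧
    (∀ b ∈ P.alts, b ≠ a → P'.rel i a b = true) ∧
    (∀ b ∈ P.alts, b ≠ a → ∀ c ∈ P.alts, c ≠ a → P'.rel i b c = P.rel i b c) ∧
    (∀ j ∈ P.voters, j ≠ i → ∀ x ∈ P.alts, ∀ y ∈ P.alts, P'.rel j x y = P.rel j x y)

/-- `P'` is obtained from `P` by adding one new voter who ranks `a` uniquely
first, all old voters' relations being unchanged. -/
def AddTopVoter (P P' : Profile α) (a : α) : Prop :=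
  P'.alts = P.alts ∧
  ∃ j, j ∉ P.voters ∧ P'.voters = insert j P.voters ∧
    (∀ b ∈ P.alts, b ≠ a → P'.rel j a b = true) ∧
    (∀ i ∈ P.voters, ∀ x ∈ P.alts, ∀ y ∈ P.alts, P'.rel i x y = P.rel i x y)

/-- `P'` is obtained from `P` by one voter improving the position of `a` in
their ballot, while nothing else changes. -/
def ImproveFor (P P' : Profile α) (a : α) : Prop :=
  P'.voters = P.voters ∧ P'.alts = P.alts ∧
  ∃ i ∈ P.voters,
    (∃ b ∈ P.alts, b ≠ a ∧
      ((P.rel i a b = false ∧ P'.rel i a b = true) ∨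
        (P.rel i b a = true ∧ P'.rel i b a = false))) ∧
    (∀ c ∈ P.alts, c ≠ a →
      (P.rel i a c = true → P'.rel i a c = true) ∧
      (P.rel i c a = false → P'.rel i c a = false)) ∧
    (∀ c ∈ P.alts, c ≠ a → ∀ d ∈ P.alts, d ≠ a → P'.rel i c d = P.rel i c d) ∧
    (∀ j ∈ P.voters, j ≠ i → ∀ x ∈ P.alts, ∀ y ∈ P.alts, P'.rel j x y = P.rel j x y)

/-- Anonymity relative to a domain `D` of profiles. -/
def Anonymity (D : Set (Profile α)) (F : Profile α → Finset α) : Prop :=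
  ∀ P ∈ D, ∀ P' ∈ D, P.alts = P'.alts →
    (∃ π : Equiv.Perm ℕ, P.voters.image π = P'.voters ∧
      ∀ i ∈ P.voters, ∀ a ∈ P.alts, ∀ b ∈ P.alts, P.rel i a b = P'.rel (π i) a b) →
    F P = F P'

/-- Neutrality relative to a domain `D` of profiles. -/
def Neutrality (D : Set (Profile α)) (F : Profile α → Finset α) : Prop :=
  ∀ P ∈ D, ∀ P' ∈ D, P.voters = P'.voters →
    ∀ τ : Equiv.Perm α, P.alts.image τ = P'.alts →
      (∀ i ∈ P.voters, ∀ a ∈ P.alts, ∀ b ∈ P.alts, P.rel i a b = P'.rel i (τ a) (τ b)) →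
      (F P).image τ = F P'

/-- Weak positive responsiveness relative to a domain `D` of profiles. -/
def WeakPositiveResponsiveness (D : Set (Profile α)) (F : Profile α → Finset α) : Prop :=
  ∀ P ∈ D, ∀ P' ∈ D, ∀ a ∈ F P, MoveLastToFirst P P' a → F P' = {a}

/-- (Full) positive responsiveness relative to a domain `D` of profiles. -/
def PositiveResponsiveness (D : Set (Profile α)) (F : Profile α → Finset α) : Prop :=
  ∀ P ∈ D, ∀ P' ∈ D, ∀ a ∈ F P, ImproveFor P P' a → F P' = {a}

/-- Positive involvement relative to a domain `D` of profiles. -/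
def PositiveInvolvement (D : Set (Profile α)) (F : Profile α → Finset α) : Prop :=
  ∀ P ∈ D, ∀ P' ∈ D, ∀ a ∈ F P, AddTopVoter P P' a → a ∈ F P'

/-- Near immunity to spoilers relative to a domain `D` of profiles. -/
def NearImmunityToSpoilers (D : Set (Profile α)) (F : Profile α → Finset α) : Prop :=
  ∀ P ∈ D, ∀ a ∈ P.alts, ∀ b ∈ P.alts,
    P.minus b ∈ D → P.restrict {a, b} ∈ D →
    F (P.minus b) = {a} → F (P.restrict {a, b}) = {a} → b ∉ F P → a ∈ F P

/-- Immunity to spoilers relative to a domain `D` of profiles. -/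
def ImmunityToSpoilers (D : Set (Profile α)) (F : Profile α → Finset α) : Prop :=
  ∀ P ∈ D, ∀ a ∈ P.alts, ∀ b ∈ P.alts,
    P.minus b ∈ D → P.restrict {a, b} ∈ D →
    a ∈ F (P.minus b) → F (P.restrict {a, b}) = {a} → b ∉ F P → a ∈ F P

/-- (Inclusion) homogeneity relative to a domain `D` of profiles. -/
def Homogeneity (D : Set (Profile α)) (F : Profile α → Finset α) : Prop :=
  ∀ P ∈ D, P.double ∈ D ∧ F P ⊆ F P.double

/-- Block preservation relative to a domain `D` of profiles. -/
def BlockPreservation (D : Set (Profile α)) (F : Profile α → Finset α) : Prop :=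
  ∀ P ∈ D, ∀ Q ∈ D, Disjoint P.voters Q.voters → IsBlock P.alts Q →
    P.combine Q ∈ D ∧ F P ⊆ F (P.combine Q)

/-- Condorcet consistency relative to a domain `D` of profiles. -/
def CondorcetConsistent (D : Set (Profile α)) (F : Profile α → Finset α) : Prop :=
  ∀ P ∈ D, ∀ c ∈ P.alts, (∀ x ∈ P.alts, x ≠ c → 0 < Margin P c x) → F P = {c}

/-- The domain of all (strict-weak-order) profiles with exactly two alternatives. -/
def Dom2 (α : Type*) : Set (Profile α) :=
  {P | IsSWO P ∧ P.voters.Nonempty ∧ P.alts.card = 2}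

/-- The domain of all profiles with two or three alternatives. -/
def Dom23 (α : Type*) : Set (Profile α) :=
  {P | IsSWO P ∧ P.voters.Nonempty ∧ (P.alts.card = 2 ∨ P.alts.card = 3)}

/-- The domain of all profiles with at least two alternatives. -/
def DomGe2 (α : Type*) : Set (Profile α) :=
  {P | IsSWO P ∧ P.voters.Nonempty ∧ 2 ≤ P.alts.card}

/-- The domain of all profiles. -/
def DomAll (α : Type*) : Set (Profile α) :=
  {P | IsSWO P ∧ P.voters.Nonempty ∧ P.alts.Nonempty}

/-- The support-based Minimax score of `a`: the maximum of `Support P b a`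
over all `b` with a positive margin over `a` (`0` if there is no such `b`). -/
def SupportMMScore (P : Profile α) (a : α) : ℕ :=
  WithBot.unbotD 0 ((((P.alts.erase a).filter fun b => 0 < Margin P b a).image fun b =>
    Support P b a).max)

/-- Support-based Minimax: alternatives with minimal support-based Minimax score. -/
def SupportMinimax (P : Profile α) : Finset α :=
  P.alts.filter fun a => ∀ b ∈ P.alts, SupportMMScore P a ≤ SupportMMScore P b

/-- The set of weak Condorcet winners in `P`. -/
def WeakCondorcetWinners (P : Profile α) : Finset α :=
  P.alts.filter fun a => ∀ x ∈ P.alts, 0 ≤ Margin P a x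

/-- The plurality score of `a`: the number of voters ranking `a` uniquely first. -/
def PluralityScore (P : Profile α) (a : α) : ℕ :=
  (P.voters.filter fun i => ∀ b ∈ P.alts, b ≠ a → P.rel i a b = true).card

/-- The Condorcet-Plurality voting method: the weak Condorcet winners if there
are any; otherwise the alternatives with maximal plurality score. -/
def CP (P : Profile α) : Finset α :=
  if (WeakCondorcetWinners P).Nonempty then WeakCondorcetWinners P
  else P.alts.filter fun a => ∀ b ∈ P.alts, PluralityScore P b ≤ PluralityScore P a

/-- The marginal Borda score of `a`: the sum of the margins of `a` over the
alternatives. -/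
def MarginalBorda (P : Profile α) (a : α) : ℤ :=
  ∑ b ∈ P.alts, Margin P a b

/-- Minimax MB: the Minimax winners with greatest marginal Borda score. -/
def MinimaxMB (P : Profile α) : Finset α :=
  (Minimax P).filter fun a => ∀ b ∈ Minimax P, MarginalBorda P b ≤ MarginalBorda P a

/-- `P` and `P'` have the same ordinal margin graph. -/
def SameOrdinalMarginGraph (P P' : Profile α) : Prop :=
  P.alts = P'.alts ∧
  (∀ a ∈ P.alts, ∀ b ∈ P.alts, (0 < Margin P a b ↔ 0 < Margin P' a b)) ∧
  (∀ a ∈ P.alts, ∀ b ∈ P.alts, ∀ c ∈ P.alts, ∀ d ∈ P.alts,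
    (Margin P c d ≤ Margin P a b ↔ Margin P' c d ≤ Margin P' a b))

/-- Ordinal margin invariance relative to a domain `D` of profiles. -/
def OrdinalMarginInvariance (D : Set (Profile α)) (F : Profile α → Finset α) : Prop :=
  ∀ P ∈ D, ∀ P' ∈ D, SameOrdinalMarginGraph P P' → F P = F P'

/-- `P` is uniquely-weighted: distinct pairs of distinct alternatives have
distinct margins. -/
def UniquelyWeighted (P : Profile α) : Prop :=
  ∀ a ∈ P.alts, ∀ b ∈ P.alts, ∀ c ∈ P.alts, ∀ d ∈ P.alts,
    a ≠ b → c ≠ d → (a, b) ≠ (c, d) → Margin P a b ≠ Margin P c d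

/-! ### Auxiliary machinery for the proof -/

section Aux

set_option linter.unusedSectionVars false

variable {α : Type*} [DecidableEq α]

/-- Contribution of a single ballot to a margin. -/
def contrib (r : α → α → Bool) (a c : α) : ℤ :=
  (if r a c = true then 1 else 0) - (if r c a = true then 1 else 0)

theorem card_filter_int (s : Finset ℕ) (p : ℕ → Prop) [DecidablePred p] :
    ((s.filter p).card : ℤ) = ∑ i ∈ s, if p i then (1 : ℤ) else 0 := by
  rw [Finset.card_filter]
  push_cast
  rfl

theorem margin_eq_sum (P : Profile α) (a c : α) :
    Margin P a c = ∑ i ∈ P.voters, contrib (P.rel i) a c := by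
  unfold Margin
  rw [card_filter_int, card_filter_int, ← Finset.sum_sub_distrib]
  rfl

theorem margin_antisymm (P : Profile α) (a c : α) :
    Margin P a c = - Margin P c a := by
  unfold Margin; ring

/-- Adding one voter. -/
def addV (P : Profile α) (j : ℕ) (r : α → α → Bool) : Profile α where
  voters := insert j P.voters
  alts := P.alts
  rel := fun i a c => if i = j then r a c else P.rel i a c

theorem margin_addV (P : Profile α) {j : ℕ} (hj : j ∉ P.voters) (r : α → α → Bool) (a c : α) :
    Margin (addV P j r) a c = Margin P a c + contrib r a c := by
  rw [margin_eq_sum, margin_eq_sum]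
  show (∑ i ∈ insert j P.voters,
      contrib (fun a c => if i = j then r a c else P.rel i a c) a c) = _
  rw [Finset.sum_insert hj, add_comm]
  congr 1
  · apply Finset.sum_congr rfl
    intro i hi
    have hne : i ≠ j := fun h => hj (h ▸ hi)
    simp [hne]
  · simp

/-- Deleting one voter. -/
def delV (P : Profile α) (j : ℕ) : Profile α where
  voters := P.voters.erase j
  alts := P.alts
  rel := P.rel

theorem margin_delV (P : Profile α) {j : ℕ} (hj : j ∈ P.voters) (a c : α) :
    Margin (delV P j) a c = Margin P a c - contrib (P.rel j) a c := by
  rw [margin_eq_sum, margin_eq_sum]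
  show (∑ i ∈ P.voters.erase j, contrib (P.rel i) a c) = _
  rw [Finset.sum_erase_eq_sub hj]

/-- Modifying one voter's ballot. -/
def modV (P : Profile α) (j : ℕ) (r : α → α → Bool) : Profile α where
  voters := P.voters
  alts := P.alts
  rel := fun i a c => if i = j then r a c else P.rel i a c

theorem margin_modV (P : Profile α) {j : ℕ} (hj : j ∈ P.voters) (r : α → α → Bool) (a c : α) :
    Margin (modV P j r) a c = Margin P a c - contrib (P.rel j) a c + contrib r a c := by
  rw [margin_eq_sum, margin_eq_sum]
  have e1 : (∑ i ∈ P.voters, contrib ((modV P j r).rel i) a c)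
      = contrib r a c + ∑ i ∈ P.voters.erase j, contrib (P.rel i) a c := by
    rw [← Finset.add_sum_erase _ _ hj]
    congr 1
    · simp [modV]
    · apply Finset.sum_congr rfl
      intro i hi
      have hne : i ≠ j := (Finset.mem_erase.mp hi).1
      simp [modV, hne]
  rw [show (∑ i ∈ (modV P j r).voters, contrib ((modV P j r).rel i) a c)
      = ∑ i ∈ P.voters, contrib ((modV P j r).rel i) a c from rfl,
    e1, Finset.sum_erase_eq_sub hj]
  ring

theorem margin_combine (P Q : Profile α) (h : Disjoint P.voters Q.voters) (a c : α) :
    Margin (P.combine Q) a c = Margin P a c + Margin Q a c := by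
  rw [margin_eq_sum, margin_eq_sum, margin_eq_sum]
  show (∑ i ∈ P.voters ∪ Q.voters,
    contrib (fun a c => if i ∈ P.voters then P.rel i a c else Q.rel i a c) a c) = _
  rw [Finset.sum_union h]
  congr 1
  · apply Finset.sum_congr rfl
    intro i hi
    simp [hi]
  · apply Finset.sum_congr rfl
    intro i hi
    have : i ∉ P.voters := Finset.disjoint_right.mp h hi
    simp [this]

theorem margin_double (P : Profile α) (a c : α) :
    Margin P.double a c = 2 * Margin P a c := by
  have hs : ∀ i ∈ P.voters, i ≤ P.voters.sup id := fun i hi => Finset.le_sup (f := id) hi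
  have hd : Disjoint P.voters (P.voters.image fun i => i + (P.voters.sup id + 1)) := by
    rw [Finset.disjoint_right]
    intro i hi
    rcases Finset.mem_image.mp hi with ⟨j, _, rfl⟩
    intro hmem
    have := hs _ hmem
    omega
  rw [margin_eq_sum]
  show (∑ i ∈ P.voters ∪ P.voters.image (fun i => i + (P.voters.sup id + 1)),
      contrib (fun a c => if i ∈ P.voters then P.rel i a c
        else P.rel (i - (P.voters.sup id + 1)) a c) a c) = _
  rw [Finset.sum_union hd, Finset.sum_image (by intro p _ q _ h; beta_reduce at h; omega)]
  have e1 : (∑ i ∈ P.voters,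
      contrib (fun a c => if i ∈ P.voters then P.rel i a c
        else P.rel (i - (P.voters.sup id + 1)) a c) a c) = Margin P a c := by
    rw [margin_eq_sum]
    apply Finset.sum_congr rfl
    intro i hi
    simp [hi]
  have e2 : (∑ j ∈ P.voters,
      contrib (fun a c => if j + (P.voters.sup id + 1) ∈ P.voters then
        P.rel (j + (P.voters.sup id + 1)) a c
        else P.rel (j + (P.voters.sup id + 1) - (P.voters.sup id + 1)) a c) a c)
      = Margin P a c := by
    rw [margin_eq_sum]
    apply Finset.sum_congr rfl
    intro j hj
    have hnm : j + (P.voters.sup id + 1) ∉ P.voters :=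
      Finset.disjoint_right.mp hd (Finset.mem_image_of_mem _ hj)
    have harith : j + (P.voters.sup id + 1) - (P.voters.sup id + 1) = j := by omega
    simp [hnm, harith]
  rw [e1, e2]
  ring

end Aux


section Ballots

set_option linter.unusedSectionVars false
set_option maxHeartbeats 1000000

variable {α : Type*} [DecidableEq α]

/-- The strict linear order `a1 > a2 > a3` as a boolean relation. -/
def mkLin (a1 a2 a3 : α) : α → α → Bool := fun u v =>
  decide ((u = a1 ∧ (v = a2 ∨ v = a3)) ∨ (u = a2 ∧ v = a3))

/-- A strict-weak-order ballot on `X`. -/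
def BallotSWO (X : Finset α) (r : α → α → Bool) : Prop :=
  (∀ a ∈ X, ∀ b ∈ X, r a b = true → r b a = false) ∧
  (∀ a ∈ X, ∀ b ∈ X, ∀ c ∈ X, r a b = false → r b c = false → r a c = false)

variable {a1 a2 a3 : α}

theorem mkLin_ballotSWO (h12 : a1 ≠ a2) (h13 : a1 ≠ a3) (h23 : a2 ≠ a3)
    {X : Finset α} (tri : ∀ w ∈ X, w = a1 ∨ w = a2 ∨ w = a3) :
    BallotSWO X (mkLin a1 a2 a3) := by
  constructor
  · intro a ha b hb
    rcases tri a ha with rfl | rfl | rfl <;> rcases tri b hb with rfl | rfl | rfl <;>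
      simp [mkLin, h12, h13, h23, Ne.symm h12, Ne.symm h13, Ne.symm h23]
  · intro a ha b hb c hc
    rcases tri a ha with rfl | rfl | rfl <;> rcases tri b hb with rfl | rfl | rfl <;>
      rcases tri c hc with rfl | rfl | rfl <;>
      simp [mkLin, h12, h13, h23, Ne.symm h12, Ne.symm h13, Ne.symm h23]

theorem mkLin_isLinearOn (h12 : a1 ≠ a2) (h13 : a1 ≠ a3) (h23 : a2 ≠ a3)
    {X : Finset α} (tri : ∀ w ∈ X, w = a1 ∨ w = a2 ∨ w = a3) :
    IsLinearOn (mkLin a1 a2 a3) X := by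
  refine ⟨?_, ?_, ?_, ?_⟩
  · intro a ha
    rcases tri a ha with rfl | rfl | rfl <;>
      simp [mkLin, h12, h13, h23, Ne.symm h12, Ne.symm h13, Ne.symm h23]
  · intro a ha b hb c hc
    rcases tri a ha with rfl | rfl | rfl <;> rcases tri b hb with rfl | rfl | rfl <;>
      rcases tri c hc with rfl | rfl | rfl <;>
      simp [mkLin, h12, h13, h23, Ne.symm h12, Ne.symm h13, Ne.symm h23]
  · intro a ha b hb hab
    rcases tri a ha with rfl | rfl | rfl <;> rcases tri b hb with rfl | rfl | rfl <;>
      simp_all [mkLin, h12, h13, h23, Ne.symm h12, Ne.symm h13, Ne.symm h23]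
  · intro a ha b hb
    rcases tri a ha with rfl | rfl | rfl <;> rcases tri b hb with rfl | rfl | rfl <;>
      simp [mkLin, h12, h13, h23, Ne.symm h12, Ne.symm h13, Ne.symm h23]

/-- The six linear ballots on `{b, x, z}`. -/
def bal (b x z : α) (s : ℕ) : α → α → Bool :=
  if s = 0 then mkLin b x z
  else if s = 1 then mkLin b z x
  else if s = 2 then mkLin x b z
  else if s = 3 then mkLin x z b
  else if s = 4 then mkLin z b x
  else mkLin z x b

theorem tri_perm {X : Finset α} {b x z : α} (tri : ∀ w ∈ X, w = b ∨ w = x ∨ w = z) :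
    (∀ w ∈ X, w = b ∨ w = z ∨ w = x) ∧ (∀ w ∈ X, w = x ∨ w = b ∨ w = z) ∧
    (∀ w ∈ X, w = x ∨ w = z ∨ w = b) ∧ (∀ w ∈ X, w = z ∨ w = b ∨ w = x) ∧
    (∀ w ∈ X, w = z ∨ w = x ∨ w = b) := by
  refine ⟨?_, ?_, ?_, ?_, ?_⟩ <;> intro w hw <;> rcases tri w hw with h | h | h <;> tauto

theorem bal0 {b x z : α} : bal b x z 0 = mkLin b x z := rfl
theorem bal1 {b x z : α} : bal b x z 1 = mkLin b z x := rfl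
theorem bal2 {b x z : α} : bal b x z 2 = mkLin x b z := rfl
theorem bal3 {b x z : α} : bal b x z 3 = mkLin x z b := rfl
theorem bal4 {b x z : α} : bal b x z 4 = mkLin z b x := rfl
theorem bal5 {b x z : α} : bal b x z 5 = mkLin z x b := rfl

/-- A block profile on six fresh voters `n, …, n+5`. -/
def blockProfile (X : Finset α) (b x z : α) (n : ℕ) : Profile α where
  voters := (Finset.range 6).image (n + ·)
  alts := X
  rel := fun i => bal b x z (i - n)

theorem mem_blockProfile_voters {X : Finset α} {b x z : α} {n i : ℕ} :
    i ∈ (blockProfile X b x z n).voters ↔ ∃ s, s < 6 ∧ i = n + s := by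
  constructor
  · intro h
    rcases Finset.mem_image.mp h with ⟨s, hs, rfl⟩
    exact ⟨s, Finset.mem_range.mp hs, rfl⟩
  · rintro ⟨s, hs, rfl⟩
    exact Finset.mem_image.mpr ⟨s, Finset.mem_range.mpr hs, rfl⟩

theorem rel_blockProfile {X : Finset α} {b x z : α} (n s : ℕ) :
    (blockProfile X b x z n).rel (n + s) = bal b x z s := by
  show bal b x z (n + s - n) = _
  rw [Nat.add_sub_cancel_left]

theorem margin_blockProfile {X : Finset α} {b x z : α} (h12 : b ≠ x) (h13 : b ≠ z)
    (h23 : x ≠ z) (n : ℕ) (a c : α)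
    (h : (a = x ∧ c = b) ∨ (a = z ∧ c = b) ∨ (a = z ∧ c = x)) :
    Margin (blockProfile X b x z n) a c = 0 := by
  rw [margin_eq_sum]
  show (∑ i ∈ (Finset.range 6).image (n + ·), contrib (bal b x z (i - n)) a c) = 0
  rw [Finset.sum_image (by intro p _ q _ h; beta_reduce at h; omega)]
  have e : ∀ s ∈ Finset.range 6, contrib (bal b x z (n + s - n)) a c
      = contrib (bal b x z s) a c := by
    intro s _
    rw [Nat.add_sub_cancel_left]
  rw [Finset.sum_congr rfl e, Finset.sum_range_succ, Finset.sum_range_succ,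
    Finset.sum_range_succ, Finset.sum_range_succ, Finset.sum_range_succ,
    Finset.sum_range_succ, Finset.sum_range_zero]
  rcases h with ⟨rfl, rfl⟩ | ⟨rfl, rfl⟩ | ⟨rfl, rfl⟩ <;>
    simp [bal, contrib, mkLin, h12, h13, h23, Ne.symm h12, Ne.symm h13, Ne.symm h23]

theorem ballotSWO_bal {X : Finset α} {b x z : α} (h12 : b ≠ x) (h13 : b ≠ z)
    (h23 : x ≠ z) (tri : ∀ w ∈ X, w = b ∨ w = x ∨ w = z) (s : ℕ) :
    BallotSWO X (bal b x z s) := by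
  have h : s = 0 ∨ s = 1 ∨ s = 2 ∨ s = 3 ∨ s = 4 ∨ (s ≠ 0 ∧ s ≠ 1 ∧ s ≠ 2 ∧ s ≠ 3 ∧ s ≠ 4) := by
    omega
  rcases h with rfl | rfl | rfl | rfl | rfl | ⟨h0, h1, h2, h3, h4⟩
  · exact mkLin_ballotSWO h12 h13 h23 tri
  · exact mkLin_ballotSWO h13 h12 (Ne.symm h23)
      (tri_perm tri).1
  · exact mkLin_ballotSWO (Ne.symm h12) h23 h13
      (tri_perm tri).2.1
  · exact mkLin_ballotSWO h23 (Ne.symm h12) (Ne.symm h13)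
      (tri_perm tri).2.2.1
  · exact mkLin_ballotSWO (Ne.symm h13) (Ne.symm h23) h12
      (tri_perm tri).2.2.2.1
  · have : bal b x z s = mkLin z x b := by simp [bal, h0, h1, h2, h3, h4]
    rw [this]
    exact mkLin_ballotSWO (Ne.symm h23) (Ne.symm h13) (Ne.symm h12)
      (tri_perm tri).2.2.2.2

theorem blockProfile_mem_Dom23 {X : Finset α} {b x z : α} (h12 : b ≠ x) (h13 : b ≠ z)
    (h23 : x ≠ z) (tri : ∀ w ∈ X, w = b ∨ w = x ∨ w = z)
    (hcard : X.card = 2 ∨ X.card = 3) (n : ℕ) :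
    blockProfile X b x z n ∈ Dom23 α := by
  refine ⟨?_, ⟨n, mem_blockProfile_voters.mpr ⟨0, by norm_num, by omega⟩⟩, hcard⟩
  intro i _
  have : (blockProfile X b x z n).rel i = bal b x z (i - n) := rfl
  rw [this]
  exact ballotSWO_bal h12 h13 h23 tri (i - n)

theorem isBlock_blockProfile {X : Finset α} {b x z : α} (h12 : b ≠ x) (h13 : b ≠ z)
    (h23 : x ≠ z) (hbX : b ∈ X) (hxX : x ∈ X) (hzX : z ∈ X)
    (tri : ∀ w ∈ X, w = b ∨ w = x ∨ w = z) (n : ℕ) :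
    IsBlock X (blockProfile X b x z n) := by
  refine ⟨rfl, ?_, ?_⟩
  · intro i hi
    rcases mem_blockProfile_voters.mp hi with ⟨s, hs, rfl⟩
    rw [rel_blockProfile]
    have ds : s = 0 ∨ s = 1 ∨ s = 2 ∨ s = 3 ∨ s = 4 ∨ s = 5 := by omega
    rcases ds with rfl | rfl | rfl | rfl | rfl | rfl
    · rw [bal0]; exact mkLin_isLinearOn h12 h13 h23 tri
    · rw [bal1]
      exact mkLin_isLinearOn h13 h12 (Ne.symm h23)
        (tri_perm tri).1
    · rw [bal2]
      exact mkLin_isLinearOn (Ne.symm h12) h23 h13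
        (tri_perm tri).2.1
    · rw [bal3]
      exact mkLin_isLinearOn h23 (Ne.symm h12) (Ne.symm h13)
        (tri_perm tri).2.2.1
    · rw [bal4]
      exact mkLin_isLinearOn (Ne.symm h13) (Ne.symm h23) h12
        (tri_perm tri).2.2.2.1
    · rw [bal5]
      exact mkLin_isLinearOn (Ne.symm h23) (Ne.symm h13) (Ne.symm h12)
        (tri_perm tri).2.2.2.2
  · intro r hr
    obtain ⟨hirr, htr, htot, hasym⟩ := hr
    have key : ∀ s, s < 6 → (∀ a ∈ X, ∀ c ∈ X, bal b x z s a c = r a c) →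
        ∃! i, i ∈ (blockProfile X b x z n).voters ∧
          ∀ a ∈ X, ∀ c ∈ X, (blockProfile X b x z n).rel i a c = r a c := by
      intro s hs hmatch
      refine ⟨n + s, ⟨mem_blockProfile_voters.mpr ⟨s, hs, rfl⟩,
        fun a ha c hc => by rw [rel_blockProfile]; exact hmatch a ha c hc⟩, ?_⟩
      rintro y ⟨hy, hymatch⟩
      rcases mem_blockProfile_voters.mp hy with ⟨s', hs', rfl⟩
      have e1 : bal b x z s' b x = r b x := by
        rw [← rel_blockProfile (X := X) n s']; exact hymatch b hbX x hxX
      have e2 : bal b x z s' b z = r b z := by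
        rw [← rel_blockProfile (X := X) n s']; exact hymatch b hbX z hzX
      have e3 : bal b x z s' x z = r x z := by
        rw [← rel_blockProfile (X := X) n s']; exact hymatch x hxX z hzX
      have f1 : bal b x z s b x = r b x := hmatch b hbX x hxX
      have f2 : bal b x z s b z = r b z := hmatch b hbX z hzX
      have f3 : bal b x z s x z = r x z := hmatch x hxX z hzX
      have ds : s = 0 ∨ s = 1 ∨ s = 2 ∨ s = 3 ∨ s = 4 ∨ s = 5 := by omega
      have ds' : s' = 0 ∨ s' = 1 ∨ s' = 2 ∨ s' = 3 ∨ s' = 4 ∨ s' = 5 := by omega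
      have hss : s' = s := by
        rcases ds with rfl | rfl | rfl | rfl | rfl | rfl <;>
          rcases ds' with rfl | rfl | rfl | rfl | rfl | rfl <;>
          simp_all [bal0, bal1, bal2, bal3, bal4, bal5, mkLin,
            h12, h13, h23, Ne.symm h12, Ne.symm h13, Ne.symm h23]
      rw [hss]
    have dbb : r b b = false := hirr b hbX
    have dxx : r x x = false := hirr x hxX
    have dzz : r z z = false := hirr z hzX
    by_cases hbx : r b x = true <;> by_cases hbz : r b z = true <;> by_cases hxz : r x z = true
    · -- b > x > z : ballot 0
      have hxb : r x b = false := hasym b hbX x hxX hbx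
      have hzb : r z b = false := hasym b hbX z hzX hbz
      have hzx : r z x = false := hasym x hxX z hzX hxz
      apply key 0 (by norm_num)
      intro a ha c hc
      rcases tri a ha with rfl | rfl | rfl <;> rcases tri c hc with rfl | rfl | rfl <;>
        simp_all [bal0, bal1, bal2, bal3, bal4, bal5, mkLin,
          h12, h13, h23, Ne.symm h12, Ne.symm h13, Ne.symm h23]
    · -- (t,t,f): b > z > x : ballot 1
      rw [Bool.not_eq_true] at hxz
      have hzx : r z x = true := (htot x hxX z hzX h23).resolve_left (by simp [hxz])
      have hxb : r x b = false := hasym b hbX x hxX hbx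
      have hzb : r z b = false := hasym b hbX z hzX hbz
      apply key 1 (by norm_num)
      intro a ha c hc
      rcases tri a ha with rfl | rfl | rfl <;> rcases tri c hc with rfl | rfl | rfl <;>
        simp_all [bal0, bal1, bal2, bal3, bal4, bal5, mkLin,
          h12, h13, h23, Ne.symm h12, Ne.symm h13, Ne.symm h23]
    · -- (t,f,t): impossible by transitivity
      rw [Bool.not_eq_true] at hbz
      exact absurd (htr b hbX x hxX z hzX hbx hxz) (by simp [hbz])
    · -- (t,f,f): z > b > x : ballot 4
      rw [Bool.not_eq_true] at hbz hxz
      have hzb : r z b = true := (htot b hbX z hzX h13).resolve_left (by simp [hbz])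
      have hzx : r z x = true := (htot x hxX z hzX h23).resolve_left (by simp [hxz])
      have hxb : r x b = false := hasym b hbX x hxX hbx
      apply key 4 (by norm_num)
      intro a ha c hc
      rcases tri a ha with rfl | rfl | rfl <;> rcases tri c hc with rfl | rfl | rfl <;>
        simp_all [bal0, bal1, bal2, bal3, bal4, bal5, mkLin,
          h12, h13, h23, Ne.symm h12, Ne.symm h13, Ne.symm h23]
    · -- (f,t,t): x > b > z : ballot 2
      rw [Bool.not_eq_true] at hbx
      have hxb : r x b = true := (htot b hbX x hxX h12).resolve_left (by simp [hbx])
      have hzb : r z b = false := hasym b hbX z hzX hbz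
      have hzx : r z x = false := hasym x hxX z hzX hxz
      apply key 2 (by norm_num)
      intro a ha c hc
      rcases tri a ha with rfl | rfl | rfl <;> rcases tri c hc with rfl | rfl | rfl <;>
        simp_all [bal0, bal1, bal2, bal3, bal4, bal5, mkLin,
          h12, h13, h23, Ne.symm h12, Ne.symm h13, Ne.symm h23]
    · -- (f,t,f): impossible by transitivity
      rw [Bool.not_eq_true] at hbx hxz
      have hxb : r x b = true := (htot b hbX x hxX h12).resolve_left (by simp [hbx])
      exact absurd (htr x hxX b hbX z hzX hxb hbz) (by simp [hxz])
    · -- (f,f,t): x > z > b : ballot 3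
      rw [Bool.not_eq_true] at hbx hbz
      have hxb : r x b = true := (htot b hbX x hxX h12).resolve_left (by simp [hbx])
      have hzb : r z b = true := (htot b hbX z hzX h13).resolve_left (by simp [hbz])
      have hzx : r z x = false := hasym x hxX z hzX hxz
      apply key 3 (by norm_num)
      intro a ha c hc
      rcases tri a ha with rfl | rfl | rfl <;> rcases tri c hc with rfl | rfl | rfl <;>
        simp_all [bal0, bal1, bal2, bal3, bal4, bal5, mkLin,
          h12, h13, h23, Ne.symm h12, Ne.symm h13, Ne.symm h23]
    · -- (f,f,f): z > x > b : ballot 5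
      rw [Bool.not_eq_true] at hbx hbz hxz
      have hxb : r x b = true := (htot b hbX x hxX h12).resolve_left (by simp [hbx])
      have hzb : r z b = true := (htot b hbX z hzX h13).resolve_left (by simp [hbz])
      have hzx : r z x = true := (htot x hxX z hzX h23).resolve_left (by simp [hxz])
      apply key 5 (by norm_num)
      intro a ha c hc
      rcases tri a ha with rfl | rfl | rfl <;> rcases tri c hc with rfl | rfl | rfl <;>
        simp_all [bal0, bal1, bal2, bal3, bal4, bal5, mkLin,
          h12, h13, h23, Ne.symm h12, Ne.symm h13, Ne.symm h23]

end Ballots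


section Chain

set_option linter.unusedSectionVars false
set_option maxHeartbeats 1000000

variable {α : Type*} [DecidableEq α]

theorem F_eq_singleton {F : Profile α → Finset α} {P : Profile α} {b : α}
    (hne : (F P).Nonempty) (h : ∀ w ∈ F P, w = b) : F P = {b} := by
  rcases hne with ⟨w, hw⟩
  have hb : b ∈ F P := h w hw ▸ hw
  exact Finset.eq_singleton_iff_unique_mem.mpr ⟨hb, h⟩

theorem contrib_mkLin {a1 a2 a3 : α} (h12 : a1 ≠ a2) (h13 : a1 ≠ a3) (h23 : a2 ≠ a3) :
    contrib (mkLin a1 a2 a3) a1 a2 = 1 ∧ contrib (mkLin a1 a2 a3) a1 a3 = 1 ∧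
    contrib (mkLin a1 a2 a3) a2 a3 = 1 ∧ contrib (mkLin a1 a2 a3) a2 a1 = -1 ∧
    contrib (mkLin a1 a2 a3) a3 a1 = -1 ∧ contrib (mkLin a1 a2 a3) a3 a2 = -1 := by
  refine ⟨?_, ?_, ?_, ?_, ?_, ?_⟩ <;>
    simp [contrib, mkLin, h12, h13, h23, Ne.symm h12, Ne.symm h13, Ne.symm h23]

theorem mkLin_fst_snd {a1 a2 a3 : α} : mkLin a1 a2 a3 a1 a2 = true := by simp [mkLin]
theorem mkLin_fst_thd {a1 a2 a3 : α} : mkLin a1 a2 a3 a1 a3 = true := by simp [mkLin]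
theorem mkLin_snd_thd {a1 a2 a3 : α} : mkLin a1 a2 a3 a2 a3 = true := by simp [mkLin]

theorem rel_addV_self {P : Profile α} {j : ℕ} {r : α → α → Bool} :
    (addV P j r).rel j = r := by
  funext a c; exact if_pos rfl

theorem rel_addV_ne {P : Profile α} {j i : ℕ} (h : i ≠ j) {r : α → α → Bool} :
    (addV P j r).rel i = P.rel i := by
  funext a c; exact if_neg h

theorem rel_modV_self {P : Profile α} {j : ℕ} {r : α → α → Bool} :
    (modV P j r).rel j = r := by
  funext a c; exact if_pos rfl

theorem rel_modV_ne {P : Profile α} {j i : ℕ} (h : i ≠ j) {r : α → α → Bool} :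
    (modV P j r).rel i = P.rel i := by
  funext a c; exact if_neg h

theorem isSWO_addV {P : Profile α} (hP : IsSWO P) {j : ℕ} (hj : j ∉ P.voters)
    {r : α → α → Bool} (hr : BallotSWO P.alts r) : IsSWO (addV P j r) := by
  intro i hi
  rcases Finset.mem_insert.mp hi with rfl | hi'
  · show BallotSWO P.alts ((addV P i r).rel i)
    rw [rel_addV_self]; exact hr
  · have hne : i ≠ j := by rintro rfl; exact hj hi'
    show BallotSWO P.alts ((addV P j r).rel i)
    rw [rel_addV_ne hne]
    exact hP i hi'

theorem isSWO_delV {P : Profile α} (hP : IsSWO P) (j : ℕ) : IsSWO (delV P j) := by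
  intro i hi
  exact hP i (Finset.mem_of_mem_erase hi)

theorem isSWO_modV {P : Profile α} (hP : IsSWO P) {j : ℕ}
    {r : α → α → Bool} (hr : BallotSWO P.alts r) : IsSWO (modV P j r) := by
  intro i hi
  by_cases hij : i = j
  · subst hij
    show BallotSWO P.alts ((modV P i r).rel i)
    rw [rel_modV_self]; exact hr
  · show BallotSWO P.alts ((modV P j r).rel i)
    rw [rel_modV_ne hij]
    exact hP i hi

theorem addV_mem_Dom23 {P : Profile α} (hP : P ∈ Dom23 α) {j : ℕ} (hj : j ∉ P.voters)
    {r : α → α → Bool} (hr : BallotSWO P.alts r) : addV P j r ∈ Dom23 α :=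
  ⟨isSWO_addV hP.1 hj hr, ⟨j, Finset.mem_insert_self j _⟩, hP.2.2⟩

theorem delV_mem_Dom23 {P : Profile α} (hP : P ∈ Dom23 α) {j : ℕ}
    (hne : (P.voters.erase j).Nonempty) : delV P j ∈ Dom23 α :=
  ⟨isSWO_delV hP.1 j, hne, hP.2.2⟩

theorem modV_mem_Dom23 {P : Profile α} (hP : P ∈ Dom23 α) {j : ℕ}
    {r : α → α → Bool} (hr : BallotSWO P.alts r) : modV P j r ∈ Dom23 α :=
  ⟨isSWO_modV hP.1 hr, hP.2.1, hP.2.2⟩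

theorem addTopVoter_addV {P : Profile α} {j : ℕ} (hj : j ∉ P.voters) {r : α → α → Bool}
    {d : α} (hd : ∀ c ∈ P.alts, c ≠ d → r d c = true) : AddTopVoter P (addV P j r) d := by
  refine ⟨rfl, j, hj, rfl, ?_, ?_⟩
  · intro c hc hcd
    rw [rel_addV_self]
    exact hd c hc hcd
  · intro i hi a _ c _
    have hne : i ≠ j := by rintro rfl; exact hj hi
    rw [rel_addV_ne hne]

/-- Iteratively add `k` fresh voters, all with ballot `r`. -/
def addTops (P : Profile α) (r : α → α → Bool) (μ : ℕ) : ℕ → Profile α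
  | 0 => P
  | k + 1 => addV (addTops P r μ k) (μ + k) r

theorem addTops_alts (P : Profile α) (r : α → α → Bool) (μ : ℕ) :
    ∀ k, (addTops P r μ k).alts = P.alts := by
  intro k
  induction k with
  | zero => rfl
  | succ k ih => exact ih

theorem addTops_voters_lt (P : Profile α) (r : α → α → Bool) (μ : ℕ)
    (hμ : ∀ i ∈ P.voters, i < μ) :
    ∀ k, ∀ i ∈ (addTops P r μ k).voters, i < μ + k := by
  intro k
  induction k with
  | zero => intro i hi; have := hμ i hi; omega
  | succ k ih =>
    intro i hi
    rcases Finset.mem_insert.mp hi with rfl | h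
    · omega
    · have := ih i h; omega

theorem addTops_fresh (P : Profile α) (r : α → α → Bool) (μ : ℕ)
    (hμ : ∀ i ∈ P.voters, i < μ) (k : ℕ) : μ + k ∉ (addTops P r μ k).voters := by
  intro h
  have := addTops_voters_lt P r μ hμ k _ h
  omega

theorem margin_addTops (P : Profile α) (r : α → α → Bool) (μ : ℕ)
    (hμ : ∀ i ∈ P.voters, i < μ) (a c : α) :
    ∀ k, Margin (addTops P r μ k) a c = Margin P a c + (k : ℤ) * contrib r a c := by
  intro k
  induction k with
  | zero => simp [addTops]
  | succ k ih =>
    show Margin (addV (addTops P r μ k) (μ + k) r) a c = _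
    rw [margin_addV _ (addTops_fresh P r μ hμ k) r a c, ih]
    push_cast
    ring

theorem addTops_mem_Dom23 {P : Profile α} (hP : P ∈ Dom23 α) {r : α → α → Bool}
    (hr : BallotSWO P.alts r) {μ : ℕ} (hμ : ∀ i ∈ P.voters, i < μ) :
    ∀ k, addTops P r μ k ∈ Dom23 α := by
  intro k
  induction k with
  | zero => exact hP
  | succ k ih =>
    refine addV_mem_Dom23 ih (addTops_fresh P r μ hμ k) ?_
    rw [addTops_alts]
    exact hr

theorem addTops_F {F : Profile α → Finset α} (pinv : PositiveInvolvement (Dom23 α) F)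
    {P : Profile α} (hP : P ∈ Dom23 α) {r : α → α → Bool} (hr : BallotSWO P.alts r)
    {μ : ℕ} (hμ : ∀ i ∈ P.voters, i < μ) {d : α}
    (htop : ∀ c ∈ P.alts, c ≠ d → r d c = true) (hd : d ∈ F P) :
    ∀ k, d ∈ F (addTops P r μ k) := by
  intro k
  induction k with
  | zero => exact hd
  | succ k ih =>
    refine pinv (addTops P r μ k) (addTops_mem_Dom23 hP hr hμ k)
      (addTops P r μ (k + 1)) (addTops_mem_Dom23 hP hr hμ (k + 1)) d ih ?_
    refine addTopVoter_addV (addTops_fresh P r μ hμ k) ?_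
    rw [addTops_alts]
    exact htop

/-- The key contradiction: if `d` is chosen but `e` beats `d` head-to-head and
`Margin e d + Margin e f ≥ 1`, then `e` can be made a Condorcet winner while `d`
remains chosen. -/
theorem fact1 (F : Profile α → Finset α)
    (pinv : PositiveInvolvement (Dom23 α) F) (cc : CondorcetConsistent (Dom23 α) F)
    (hom : Homogeneity (Dom23 α) F) {V : Profile α} (hV : V ∈ Dom23 α)
    {d e f : α} (hde : d ≠ e) (hdf : d ≠ f) (hef : e ≠ f)
    (hd : d ∈ V.alts) (he : e ∈ V.alts) (hf : f ∈ V.alts)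
    (htri : ∀ w ∈ V.alts, w = d ∨ w = e ∨ w = f)
    (hdF : d ∈ F V) (h1 : 1 ≤ Margin V e d) (h2 : 1 ≤ Margin V e d + Margin V e f) :
    False := by
  obtain ⟨hV2, hsub⟩ := hom V hV
  have hdF2 : d ∈ F V.double := hsub hdF
  have halts2 : V.double.alts = V.alts := rfl
  set μ := V.double.voters.sup id + 1 with hμdef
  have hμ : ∀ i ∈ V.double.voters, i < μ := fun i hi =>
    Nat.lt_succ_of_le (Finset.le_sup (f := id) hi)
  have hrSWO : BallotSWO V.double.alts (mkLin d e f) := by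
    rw [halts2]
    exact mkLin_ballotSWO hde hdf hef htri
  set u := (2 * Margin V e d - 1).toNat with hu
  have hucast : (u : ℤ) = 2 * Margin V e d - 1 := Int.toNat_of_nonneg (by omega)
  set A := addTops V.double (mkLin d e f) μ u with hA
  have hAmem : A ∈ Dom23 α := addTops_mem_Dom23 hV2 hrSWO hμ u
  have hAalts : A.alts = V.alts := addTops_alts _ _ _ u
  have hdFA : d ∈ F A := by
    refine addTops_F pinv hV2 hrSWO hμ ?_ hdF2 u
    intro c hc hcd
    rcases htri c hc with rfl | rfl | rfl
    · exact absurd rfl hcd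
    · exact mkLin_fst_snd
    · exact mkLin_fst_thd
  have hced := contrib_mkLin hde hdf hef
  have hMed : Margin A e d = 1 := by
    rw [hA, margin_addTops _ _ _ hμ, margin_double, hced.2.2.2.1, hucast]
    ring
  have hMef : Margin A e f = 2 * Margin V e f + (u : ℤ) := by
    rw [hA, margin_addTops _ _ _ hμ, margin_double, hced.2.2.1, hucast]
    ring
  have hcw : ∀ w ∈ A.alts, w ≠ e → 0 < Margin A e w := by
    intro w hw hwe
    rw [hAalts] at hw
    rcases htri w hw with rfl | rfl | rfl
    · rw [hMed]; norm_num
    · exact absurd rfl hwe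
    · rw [hMef]; omega
  have heA : e ∈ A.alts := by rw [hAalts]; exact he
  have := cc A hAmem e heA hcw
  rw [this] at hdFA
  exact hde (Finset.mem_singleton.mp hdFA)

end Chain


section Pipeline

set_option linter.unusedSectionVars false
set_option maxHeartbeats 2000000

variable {α : Type*} [DecidableEq α]

/-- Repeatedly append fresh block profiles. -/
def blocksChain (P : Profile α) (b x z : α) (m : ℕ) : ℕ → Profile α
  | 0 => P
  | t + 1 => (blocksChain P b x z m t).combine (blockProfile P.alts b x z (m + 6 * t))

theorem blocksChain_invariant (F : Profile α → Finset α)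
    (bp : BlockPreservation (Dom23 α) F)
    {P : Profile α} (hP : P ∈ Dom23 α) {b x z : α}
    (h12 : b ≠ x) (h13 : b ≠ z) (h23 : x ≠ z)
    (hbX : b ∈ P.alts) (hxX : x ∈ P.alts) (hzX : z ∈ P.alts)
    (tri : ∀ w ∈ P.alts, w = b ∨ w = x ∨ w = z)
    {m : ℕ} (hm : ∀ i ∈ P.voters, i < m)
    (hbF : b ∈ F P) :
    ∀ t, (blocksChain P b x z m t) ∈ Dom23 α ∧ b ∈ F (blocksChain P b x z m t) ∧
      (blocksChain P b x z m t).alts = P.alts ∧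
      (∀ i ∈ (blocksChain P b x z m t).voters, i < m + 6 * t) ∧
      (∀ u s, u < t → s < 6 → (m + 6 * u + s) ∈ (blocksChain P b x z m t).voters) ∧
      (∀ u s, u < t → s < 6 → ∀ (a c : α),
        (blocksChain P b x z m t).rel (m + 6 * u + s) a c = bal b x z s a c) ∧
      P.voters ⊆ (blocksChain P b x z m t).voters ∧
      Margin (blocksChain P b x z m t) x b = Margin P x b ∧
      Margin (blocksChain P b x z m t) z b = Margin P z b ∧
      Margin (blocksChain P b x z m t) z x = Margin P z x := by
  intro t
  induction t with
  | zero =>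
    refine ⟨hP, hbF, rfl, ?_, ?_, ?_, Finset.Subset.refl _, rfl, rfl, rfl⟩
    · intro i hi; have := hm i hi; omega
    · intro u s hu _; omega
    · intro u s hu _; omega
  | succ t ih =>
    obtain ⟨hDom, hbFt, halts, hlt, hmem, hrel, hsub, hm1, hm2, hm3⟩ := ih
    have hQdom : blockProfile P.alts b x z (m + 6 * t) ∈ Dom23 α :=
      blockProfile_mem_Dom23 h12 h13 h23 tri hP.2.2 _
    have hdisj : Disjoint (blocksChain P b x z m t).voters
        (blockProfile P.alts b x z (m + 6 * t)).voters := by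
      rw [Finset.disjoint_left]
      intro i hiC hiQ
      rcases mem_blockProfile_voters.mp hiQ with ⟨s, _, rfl⟩
      have := hlt _ hiC
      omega
    have hblock : IsBlock (blocksChain P b x z m t).alts
        (blockProfile P.alts b x z (m + 6 * t)) := by
      rw [halts]
      exact isBlock_blockProfile h12 h13 h23 hbX hxX hzX tri _
    obtain ⟨hdom', hsubF⟩ := bp _ hDom _ hQdom hdisj hblock
    refine ⟨hdom', hsubF hbFt, halts, ?_, ?_, ?_, ?_, ?_, ?_, ?_⟩
    · intro i hi
      rcases Finset.mem_union.mp hi with h | h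
      · have := hlt _ h; omega
      · rcases mem_blockProfile_voters.mp h with ⟨s, hs, rfl⟩; omega
    · intro u s hu hs
      rcases Nat.lt_succ_iff_lt_or_eq.mp hu with hu' | rfl
      · exact Finset.mem_union_left _ (hmem u s hu' hs)
      · exact Finset.mem_union_right _ (mem_blockProfile_voters.mpr ⟨s, hs, rfl⟩)
    · intro u s hu hs a c
      show (if (m + 6 * u + s) ∈ (blocksChain P b x z m t).voters
        then (blocksChain P b x z m t).rel (m + 6 * u + s) a c
        else (blockProfile P.alts b x z (m + 6 * t)).rel (m + 6 * u + s) a c) = _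
      rcases Nat.lt_succ_iff_lt_or_eq.mp hu with hu' | heq
      · rw [if_pos (hmem u s hu' hs)]
        exact hrel u s hu' hs a c
      · have hnot : (m + 6 * u + s) ∉ (blocksChain P b x z m t).voters := by
          intro h
          have := hlt _ h
          omega
        rw [if_neg hnot]
        show bal b x z (m + 6 * u + s - (m + 6 * t)) a c = _
        have harith : m + 6 * u + s - (m + 6 * t) = s := by omega
        rw [harith]
    · intro i hi
      exact Finset.mem_union_left _ (hsub hi)
    · show Margin ((blocksChain P b x z m t).combine _) x b = _
      rw [margin_combine _ _ hdisj, hm1,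
        margin_blockProfile h12 h13 h23 _ x b (Or.inl ⟨rfl, rfl⟩)]
      ring
    · show Margin ((blocksChain P b x z m t).combine _) z b = _
      rw [margin_combine _ _ hdisj, hm2,
        margin_blockProfile h12 h13 h23 _ z b (Or.inr (Or.inl ⟨rfl, rfl⟩))]
      ring
    · show Margin ((blocksChain P b x z m t).combine _) z x = _
      rw [margin_combine _ _ hdisj, hm3,
        margin_blockProfile h12 h13 h23 _ z x (Or.inr (Or.inr ⟨rfl, rfl⟩))]
      ring

/-- Repeatedly delete voters `g 0, g 1, …`. -/
def delChain (N : Profile α) (g : ℕ → ℕ) : ℕ → Profile α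
  | 0 => N
  | t + 1 => delV (delChain N g t) (g t)

theorem delChain_alts (N : Profile α) (g : ℕ → ℕ) :
    ∀ t, (delChain N g t).alts = N.alts := by
  intro t
  induction t with
  | zero => rfl
  | succ t ih => exact ih

theorem rel_delChain (N : Profile α) (g : ℕ → ℕ) :
    ∀ t, (delChain N g t).rel = N.rel := by
  intro t
  induction t with
  | zero => rfl
  | succ t ih => exact ih

end Pipeline


section PipelineMain

set_option linter.unusedSectionVars false
set_option maxHeartbeats 4000000

variable {α : Type*} [DecidableEq α]

/-- The main pipeline: if `b` is chosen at `P`, `x` beats `b`, `b` weakly beats `z`,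
and `Margin x b ≤ Margin z x`, we derive a contradiction. -/
theorem pipeline (F : Profile α → Finset α)
    (hF : ∀ P ∈ Dom23 α, (F P).Nonempty ∧ F P ⊆ P.alts)
    (wpr : WeakPositiveResponsiveness (Dom23 α) F)
    (pinv : PositiveInvolvement (Dom23 α) F)
    (cc : CondorcetConsistent (Dom23 α) F)
    (hom : Homogeneity (Dom23 α) F)
    (bp : BlockPreservation (Dom23 α) F)
    {P : Profile α} (hP : P ∈ Dom23 α) {b x z : α}
    (hbx : b ≠ x) (hbz : b ≠ z) (hxz : x ≠ z)
    (hbX : b ∈ P.alts) (hxX : x ∈ P.alts) (hzX : z ∈ P.alts)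
    (tri : ∀ w ∈ P.alts, w = b ∨ w = x ∨ w = z)
    (hbF : b ∈ F P)
    (hp1 : 1 ≤ Margin P x b) (hq0 : Margin P z b ≤ 0)
    (hpr : Margin P x b ≤ Margin P z x)
    (hpq : 1 ≤ Margin P x b + Margin P z b) :
    False := by
  classical
  obtain ⟨hD1, hs1⟩ := hom P hP
  obtain ⟨hD2, hs2⟩ := hom _ hD1
  obtain ⟨hD3, hs3⟩ := hom _ hD2
  have hbFV : b ∈ F P.double.double.double := hs3 (hs2 (hs1 hbF))
  have hm8 : ∀ a c : α, Margin P.double.double.double a c = 8 * Margin P a c := by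
    intro a c
    rw [margin_double, margin_double, margin_double]; ring
  set m := P.double.double.double.voters.sup id + 1 with hmdef
  have hmlt : ∀ i ∈ P.double.double.double.voters, i < m := fun i hi =>
    Nat.lt_succ_of_le (Finset.le_sup (f := id) hi)
  set J := (4 * (Margin P z x - Margin P x b) + 2).toNat with hJdef
  have hJcast : (J : ℤ) = 4 * (Margin P z x - Margin P x b) + 2 :=
    Int.toNat_of_nonneg (by omega)
  obtain ⟨hN0dom, hbFN0, hN0alts, hN0lt, hN0mem, hN0rel, hN0sub, hN0m1, hN0m2, hN0m3⟩ :=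
    blocksChain_invariant F bp hD3 hbx hbz hxz hbX hxX hzX tri hmlt hbFV (J + 1)
  set N0 := blocksChain P.double.double.double b x z m (J + 1) with hN0def
  -- the pin: move `b` from last to first for the block voter with ballot x>z>b
  set v := m + 6 * 0 + 3 with hvdef
  have hvmem : v ∈ N0.voters := hN0mem 0 3 (by omega) (by omega)
  have hvrel : ∀ a c : α, N0.rel v a c = bal b x z 3 a c := hN0rel 0 3 (by omega) (by omega)
  have hBS : BallotSWO N0.alts (mkLin b x z) := by
    rw [hN0alts]
    exact mkLin_ballotSWO hbx hbz hxz tri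
  set N1 := modV N0 v (mkLin b x z) with hN1def
  have hN1dom : N1 ∈ Dom23 α := modV_mem_Dom23 hN0dom hBS
  have hmlf : MoveLastToFirst N0 N1 b := by
    refine ⟨rfl, rfl, ?_, v, hvmem, ?_, ?_, ?_, ?_⟩
    · rw [hN0alts]; exact hbX
    · intro c hc hcb
      rw [hN0alts] at hc
      rw [hvrel, bal3]
      rcases tri c hc with rfl | rfl | rfl
      · exact absurd rfl hcb
      · exact mkLin_fst_thd
      · exact mkLin_snd_thd
    · intro c hc hcb
      rw [hN0alts] at hc
      rw [hN1def, rel_modV_self]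
      rcases tri c hc with rfl | rfl | rfl
      · exact absurd rfl hcb
      · exact mkLin_fst_snd
      · exact mkLin_fst_thd
    · intro c hc hcb c' hc' hcb'
      rw [hN0alts] at hc hc'
      rw [hN1def, rel_modV_self, hvrel, bal3]
      rcases tri c hc with rfl | rfl | rfl <;> rcases tri c' hc' with rfl | rfl | rfl <;>
        first
        | exact absurd rfl hcb
        | exact absurd rfl hcb'
        | simp [mkLin, hbx, hbz, hxz, Ne.symm hbx, Ne.symm hbz, Ne.symm hxz]
    · intro j hj hjv a _ c _
      rw [hN1def, rel_modV_ne hjv]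
  have hpin : F N1 = {b} := wpr N0 hN0dom N1 hN1dom b hbFN0 hmlf
  -- margins of N1
  have cA := contrib_mkLin (a1 := x) (a2 := z) (a3 := b) hxz (Ne.symm hbx) (Ne.symm hbz)
  have cB := contrib_mkLin (a1 := b) (a2 := x) (a3 := z) hbx hbz hxz
  have cC := contrib_mkLin (a1 := z) (a2 := b) (a3 := x) (Ne.symm hbz) (Ne.symm hxz) hbx
  have hcv : ∀ a c : α, contrib (N0.rel v) a c = contrib (mkLin x z b) a c := by
    intro a c
    unfold contrib
    rw [hvrel, hvrel, bal3]
  have hN1m1 : Margin N1 x b = 8 * Margin P x b - 2 := by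
    rw [hN1def, margin_modV _ hvmem, hcv, cA.2.1, cB.2.2.2.1, hN0m1, hm8]
    ring
  have hN1m2 : Margin N1 z b = 8 * Margin P z b - 2 := by
    rw [hN1def, margin_modV _ hvmem, hcv, cA.2.2.1, cB.2.2.2.2.1, hN0m2, hm8]
    ring
  have hN1m3 : Margin N1 z x = 8 * Margin P z x := by
    rw [hN1def, margin_modV _ hvmem, hcv, cA.2.2.2.1, cB.2.2.2.2.2, hN0m3, hm8]
    ring
  -- the removal chain
  set g : ℕ → ℕ := fun t => m + 6 * (t + 1) + 4 with hgdef
  have hg : ∀ t, g t = m + 6 * (t + 1) + 4 := fun t => rfl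
  set W := delChain N1 g with hWdef
  have hWalts : ∀ t, (W t).alts = P.alts := by
    intro t
    have h1 : (W t).alts = N1.alts := delChain_alts N1 g t
    rw [h1, hN1def]
    show N0.alts = P.alts
    rw [hN0alts]
    rfl
  have main : ∀ t, t ≤ J →
      (W t).voters = N0.voters \ (Finset.range t).image g ∧
      P.double.double.double.voters ⊆ (W t).voters ∧
      W t ∈ Dom23 α ∧
      Margin (W t) x b = 8 * Margin P x b - 2 + (t : ℤ) ∧
      Margin (W t) z b = 8 * Margin P z b - 2 - (t : ℤ) ∧
      Margin (W t) z x = 8 * Margin P z x - (t : ℤ) ∧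
      F (W t) = {b} := by
    intro t
    induction t with
    | zero =>
      intro _
      refine ⟨?_, ?_, hN1dom, ?_, ?_, ?_, hpin⟩
      · show N1.voters = _
        rw [hN1def]
        show N0.voters = _
        simp
      · intro i hi
        show i ∈ N1.voters
        rw [hN1def]
        exact hN0sub hi
      · show Margin N1 x b = _
        rw [hN1m1]; norm_num
      · show Margin N1 z b = _
        rw [hN1m2]; norm_num
      · show Margin N1 z x = _
        rw [hN1m3]; norm_num
    | succ t ih =>
      intro ht
      obtain ⟨hdesc, hsubV, hdom, hmx, hmz, hmzx, hFval⟩ := ih (by omega)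
      have hgmem : g t ∈ N0.voters := by
        rw [hg]
        exact hN0mem (t + 1) 4 (by omega) (by omega)
      have hgnotimg : g t ∉ (Finset.range t).image g := by
        rw [Finset.mem_image]
        rintro ⟨u, hu, hequ⟩
        rw [Finset.mem_range] at hu
        rw [hg, hg] at hequ
        omega
      have hgW : g t ∈ (W t).voters := by
        rw [hdesc, Finset.mem_sdiff]
        exact ⟨hgmem, hgnotimg⟩
      have hrelW : (W t).rel = N1.rel := rel_delChain N1 g t
      have hgnev : g t ≠ v := by rw [hg, hvdef]; omega
      have hgrel : ∀ a c : α, (W t).rel (g t) a c = mkLin z b x a c := by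
        intro a c
        rw [hrelW, hN1def, rel_modV_ne hgnev, hg,
          hN0rel (t + 1) 4 (by omega) (by omega), bal4]
      have hWt1 : W (t + 1) = delV (W t) (g t) := rfl
      have hdesc' : (W (t + 1)).voters = N0.voters \ (Finset.range (t + 1)).image g := by
        rw [hWt1]
        show (W t).voters.erase (g t) = _
        rw [hdesc]
        ext i
        simp only [Finset.mem_erase, Finset.mem_sdiff, Finset.mem_image, Finset.mem_range]
        constructor
        · rintro ⟨hne, him, hnot⟩
          refine ⟨him, ?_⟩
          rintro ⟨u, hu, hequ⟩
          rcases Nat.lt_succ_iff_lt_or_eq.mp hu with h | h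
          · exact hnot ⟨u, h, hequ⟩
          · rw [h] at hequ; exact hne hequ.symm
        · rintro ⟨him, hnot⟩
          refine ⟨?_, him, ?_⟩
          · intro h; exact hnot ⟨t, Nat.lt_succ_self t, h.symm⟩
          · rintro ⟨u, hu, hequ⟩; exact hnot ⟨u, Nat.lt_succ_of_lt hu, hequ⟩
      have hsubV' : P.double.double.double.voters ⊆ (W (t + 1)).voters := by
        intro i hi
        rw [hdesc', Finset.mem_sdiff]
        refine ⟨hN0sub hi, ?_⟩
        rw [Finset.mem_image]
        rintro ⟨u, _, hequ⟩
        have := hmlt i hi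
        rw [hg] at hequ
        omega
      have hne' : (W (t + 1)).voters.Nonempty := by
        obtain ⟨i0, hi0⟩ := hD3.2.1
        exact ⟨i0, hsubV' hi0⟩
      have hdom' : W (t + 1) ∈ Dom23 α := delV_mem_Dom23 hdom hne'
      have hmx' : Margin (W (t + 1)) x b = 8 * Margin P x b - 2 + ((t + 1 : ℕ) : ℤ) := by
        rw [hWt1, margin_delV _ hgW]
        have hc : contrib ((W t).rel (g t)) x b = contrib (mkLin z b x) x b := by
          unfold contrib; rw [hgrel, hgrel]
        rw [hc, cC.2.2.2.2.2, hmx]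
        push_cast
        ring
      have hmz' : Margin (W (t + 1)) z b = 8 * Margin P z b - 2 - ((t + 1 : ℕ) : ℤ) := by
        rw [hWt1, margin_delV _ hgW]
        have hc : contrib ((W t).rel (g t)) z b = contrib (mkLin z b x) z b := by
          unfold contrib; rw [hgrel, hgrel]
        rw [hc, cC.1, hmz]
        push_cast
        ring
      have hmzx' : Margin (W (t + 1)) z x = 8 * Margin P z x - ((t + 1 : ℕ) : ℤ) := by
        rw [hWt1, margin_delV _ hgW]
        have hc : contrib ((W t).rel (g t)) z x = contrib (mkLin z b x) z x := by
          unfold contrib; rw [hgrel, hgrel]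
        rw [hc, cC.2.1, hmzx]
        push_cast
        ring
      have hFne := hF (W (t + 1)) hdom'
      have hall : ∀ w ∈ F (W (t + 1)), w = b := by
        intro w hw
        have hwX : w ∈ P.alts := by
          have h2 := hFne.2 hw
          rw [hWalts (t + 1)] at h2
          exact h2
        rcases tri w hwX with rfl | rfl | rfl
        · rfl
        · -- w = x : contradiction via fact1 (make z the Condorcet winner)
          exact (fact1 F pinv cc hom hdom' hxz (Ne.symm hbx) (Ne.symm hbz)
            ((hWalts (t + 1)).symm ▸ hxX) ((hWalts (t + 1)).symm ▸ hzX)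
            ((hWalts (t + 1)).symm ▸ hbX)
            (by intro w hw'; rw [hWalts (t + 1)] at hw'; exact (tri_perm tri).2.2.1 w hw')
            hw
            (by rw [hmzx']; push_cast; omega)
            (by rw [hmzx', hmz']; push_cast; omega)).elim
        · -- w = z : contradiction via positive involvement
          have hATV : AddTopVoter (W (t + 1)) (W t) w := by
            refine ⟨by rw [hWalts t, hWalts (t + 1)], g t, ?_, ?_, ?_, ?_⟩
            · rw [hWt1]
              exact Finset.notMem_erase _ _
            · exact (Finset.insert_erase hgW).symm
            · intro c hc hcz
              rw [hWalts (t + 1)] at hc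
              rw [hgrel]
              rcases tri c hc with rfl | rfl | rfl
              · exact mkLin_fst_snd
              · exact mkLin_fst_thd
              · exact absurd rfl hcz
            · intro i _ a _ c _
              rfl
          have hzW := pinv (W (t + 1)) hdom' (W t) hdom w hw hATV
          rw [hFval] at hzW
          exact absurd (Finset.mem_singleton.mp hzW) (Ne.symm hbz)
      exact ⟨hdesc', hsubV', hdom', hmx', hmz', hmzx', F_eq_singleton hFne.1 hall⟩
  obtain ⟨_, _, hdomJ, hmxJ, _, hmzxJ, hFJ⟩ := main J (le_refl J)
  have hbWJ : b ∈ F (W J) := by rw [hFJ]; exact Finset.mem_singleton_self b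
  have hxzJ : Margin (W J) x z = - Margin (W J) z x := margin_antisymm _ _ _
  exact fact1 F pinv cc hom hdomJ hbx hbz hxz
    ((hWalts J).symm ▸ hbX) ((hWalts J).symm ▸ hxX) ((hWalts J).symm ▸ hzX)
    (by intro w hw'; rw [hWalts J] at hw'; exact tri w hw')
    hbWJ
    (by rw [hmxJ]; omega)
    (by rw [hmxJ, hxzJ, hmzxJ]; omega)

end PipelineMain


section FinalAssembly

set_option linter.unusedSectionVars false
set_option maxHeartbeats 2000000

variable {α : Type*} [DecidableEq α]

theorem triple_comm1 {a b c : α} : ({a, b, c} : Finset α) = {b, a, c} := by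
  ext q; simp; tauto

theorem triple_rot {a b c : α} : ({a, b, c} : Finset α) = {c, a, b} := by
  ext q; simp; tauto

theorem mmscore_two {P : Profile α} {a c : α} (h : P.alts = {a, c}) (hac : a ≠ c) :
    MMScore P a = Margin P c a := by
  unfold MMScore
  rw [h, Finset.erase_insert (by simp [hac]), Finset.image_singleton,
    Finset.max_singleton, WithBot.unbotD_coe]

theorem mmscore_three {P : Profile α} {a c d : α} (h : P.alts = {a, c, d})
    (hac : a ≠ c) (had : a ≠ d) :
    MMScore P a = max (Margin P c a) (Margin P d a) := by
  unfold MMScore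
  rw [h, Finset.erase_insert (by simp [hac, had]), Finset.image_insert,
    Finset.image_singleton, Finset.max_insert, Finset.max_singleton,
    ← WithBot.coe_max, WithBot.unbotD_coe]

end FinalAssembly


set_option maxHeartbeats 2000000 in
/-- The main theorem with near immunity to spoilers replaced by Condorcet
consistency: such a voting method refines Minimax. -/
theorem main_theorem_condorcet_version {α : Type*} [DecidableEq α]
    (hX : ∃ x y z : α, x ≠ y ∧ x ≠ z ∧ y ≠ z)
    (F : Profile α → Finset α)
    (hF : ∀ P ∈ Dom23 α, (F P).Nonempty ∧ F P ⊆ P.alts)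
    (anon : Anonymity (Dom23 α) F)
    (neut : Neutrality (Dom23 α) F)
    (wpr : WeakPositiveResponsiveness (Dom23 α) F)
    (pinv : PositiveInvolvement (Dom23 α) F)
    (cc : CondorcetConsistent (Dom23 α) F)
    (hom : Homogeneity (Dom23 α) F)
    (bp : BlockPreservation (Dom23 α) F) :
    ∀ P ∈ Dom23 α, F P ⊆ Minimax P := by
  intro P hP w hw
  obtain ⟨hne, hsubalts⟩ := hF P hP
  have hwX : w ∈ P.alts := hsubalts hw
  by_contra hnm
  have hex : ∃ y ∈ P.alts, MMScore P y < MMScore P w := by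
    by_contra hex
    push_neg at hex
    exact hnm (Finset.mem_filter.mpr ⟨hwX, fun y hy => hex y hy⟩)
  rcases hP.2.2 with h2 | h3
  · -- two alternatives
    obtain ⟨a, c, hac, halts⟩ := Finset.card_eq_two.mp h2
    have hsa : MMScore P a = Margin P c a := mmscore_two halts hac
    have hsc : MMScore P c = Margin P a c :=
      mmscore_two (halts.trans (Finset.pair_comm a c)) hac.symm
    have hmac := margin_antisymm P a c
    have hmem : ∀ y, y ∈ P.alts → y = a ∨ y = c := by
      intro y hy; rw [halts] at hy; simpa using hy
    rcases lt_trichotomy (Margin P a c) 0 with hlt | heq | hgt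
    · -- c is the Condorcet winner
      have hcc : F P = {c} := by
        refine cc P hP c (by rw [halts]; simp) ?_
        intro y hy hyc
        rcases hmem y hy with rfl | rfl
        · omega
        · exact absurd rfl hyc
      have hwc : w = c := Finset.mem_singleton.mp (hcc ▸ hw)
      apply hnm
      refine Finset.mem_filter.mpr ⟨hwX, ?_⟩
      intro y hy
      rw [hwc]
      rcases hmem y hy with rfl | rfl
      · rw [hsa, hsc]; omega
      · exact le_refl _
    · -- tie: both are Minimax winners
      apply hnm
      refine Finset.mem_filter.mpr ⟨hwX, ?_⟩
      have hgen : ∀ u, u ∈ P.alts → MMScore P u = 0 := by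
        intro u hu
        rcases hmem u hu with rfl | rfl
        · rw [hsa]; omega
        · rw [hsc]; omega
      intro y hy
      rw [hgen w hwX, hgen y hy]
    · -- a is the Condorcet winner
      have hcc : F P = {a} := by
        refine cc P hP a (by rw [halts]; simp) ?_
        intro y hy hya
        rcases hmem y hy with rfl | rfl
        · exact absurd rfl hya
        · omega
      have hwa : w = a := Finset.mem_singleton.mp (hcc ▸ hw)
      apply hnm
      refine Finset.mem_filter.mpr ⟨hwX, ?_⟩
      intro y hy
      rw [hwa]
      rcases hmem y hy with rfl | rfl
      · exact le_refl _
      · rw [hsa, hsc]; omega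
  · -- three alternatives
    obtain ⟨a, c, d, hac, had, hcd, halts⟩ := Finset.card_eq_three.mp h3
    have hwmem : w = a ∨ w = c ∨ w = d := by
      have h := hwX
      rw [halts] at h
      simpa using h
    obtain ⟨e, f, hwe, hwf, hef, halts'⟩ :
        ∃ e f, w ≠ e ∧ w ≠ f ∧ e ≠ f ∧ P.alts = {w, e, f} := by
      rcases hwmem with rfl | rfl | rfl
      · exact ⟨c, d, hac, had, hcd, halts⟩
      · exact ⟨a, d, Ne.symm hac, hcd, had, halts.trans triple_comm1⟩
      · exact ⟨a, c, Ne.symm had, Ne.symm hcd, hac, halts.trans triple_rot⟩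
    have heX : e ∈ P.alts := by rw [halts']; simp
    have hfX : f ∈ P.alts := by rw [halts']; simp
    have tri : ∀ q ∈ P.alts, q = w ∨ q = e ∨ q = f := by
      intro q hq; rw [halts'] at hq; simpa using hq
    have hsw : MMScore P w = max (Margin P e w) (Margin P f w) :=
      mmscore_three halts' hwe hwf
    have hse : MMScore P e = max (Margin P w e) (Margin P f e) :=
      mmscore_three (halts'.trans triple_comm1) (Ne.symm hwe) hef
    have hsf : MMScore P f = max (Margin P w f) (Margin P e f) :=
      mmscore_three (halts'.trans triple_rot) (Ne.symm hwf) (Ne.symm hef)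
    have haew := margin_antisymm P e w
    have hafw := margin_antisymm P f w
    have haef := margin_antisymm P e f
    rcases le_or_gt (Margin P e w) 0 with he0 | he1 <;>
      rcases le_or_gt (Margin P f w) 0 with hf0 | hf1
    · -- w is a weak Condorcet winner, hence a Minimax winner
      apply hnm
      refine Finset.mem_filter.mpr ⟨hwX, ?_⟩
      intro y hy
      rcases tri y hy with hyw | hye | hyf
      · rw [hyw]
      · rw [hye, hsw, hse]
        apply max_le
        · exact le_trans (by omega) (le_max_left _ _)
        · exact le_trans (by omega) (le_max_left _ _)
      · rw [hyf, hsw, hsf]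
        apply max_le
        · exact le_trans (by omega) (le_max_left _ _)
        · exact le_trans (by omega) (le_max_left _ _)
    · -- f beats w, w weakly beats e
      rcases le_or_gt (Margin P f w) (Margin P e f) with hle | hgt
      · obtain ⟨y, hy, hylt⟩ := hex
        have hMw : MMScore P w = Margin P f w := by
          rw [hsw]
          exact max_eq_right (by omega)
        have hkey : 1 ≤ Margin P f w + Margin P e w := by
          rcases tri y hy with hyw | hye | hyf
          · rw [hyw] at hylt; exact absurd hylt (lt_irrefl _)
          · rw [hye, hMw, hse] at hylt
            have h2 : Margin P w e < Margin P f w := lt_of_le_of_lt (le_max_left _ _) hylt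
            omega
          · rw [hyf, hMw, hsf] at hylt
            have h2 : Margin P e f < Margin P f w := lt_of_le_of_lt (le_max_right _ _) hylt
            omega
        exact pipeline F hF wpr pinv cc hom bp hP hwf hwe (Ne.symm hef)
          hwX hfX heX (tri_perm tri).1 hw (by omega) he0 hle hkey
      · exact fact1 F pinv cc hom hP hwf hwe (Ne.symm hef) hwX hfX heX
          (tri_perm tri).1 hw (by omega) (by omega)
    · -- e beats w, w weakly beats f
      rcases le_or_gt (Margin P e w) (Margin P f e) with hle | hgt
      · obtain ⟨y, hy, hylt⟩ := hex
        have hMw : MMScore P w = Margin P e w := by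
          rw [hsw]
          exact max_eq_left (by omega)
        have hkey : 1 ≤ Margin P e w + Margin P f w := by
          rcases tri y hy with hyw | hye | hyf
          · rw [hyw] at hylt; exact absurd hylt (lt_irrefl _)
          · rw [hye, hMw, hse] at hylt
            have h2 : Margin P f e < Margin P e w := lt_of_le_of_lt (le_max_right _ _) hylt
            omega
          · rw [hyf, hMw, hsf] at hylt
            have h2 : Margin P w f < Margin P e w := lt_of_le_of_lt (le_max_left _ _) hylt
            omega
        exact pipeline F hF wpr pinv cc hom bp hP hwe hwf hef
          hwX heX hfX tri hw (by omega) hf0 hle hkey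
      · exact fact1 F pinv cc hom hP hwe hwf hef hwX heX hfX tri hw
          (by omega) (by omega)
    · -- both e and f beat w
      rcases le_or_gt (Margin P e f) 0 with hef0 | hef1
      · exact fact1 F pinv cc hom hP hwf hwe (Ne.symm hef) hwX hfX heX
          (tri_perm tri).1 hw (by omega) (by omega)
      · exact fact1 F pinv cc hom hP hwe hwf hef hwX heX hfX tri hw
          (by omega) (by omega)


end MayMinimax
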